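/- There exists a density matrix ρ on ℂ² ⊗ ℂ² that is not separable but satisfies the CHSH inequality: for all dichotomic observables A₁, A₂, B₁, B₂ on ℂ², |Tr(ρ C)| ≤ 2, where C = A₁⊗B₁ + A₁⊗B₂ + A₂⊗B₁ − A₂⊗B₂. Hence compliance with the CHSH inequality cannot certify separability. -/

import Mathlib

open Matrix Kronecker
open scoped ComplexOrder

noncomputable section

/-- A density matrix: positive semidefinite with unit trace. -/
def IsDensityMatrix {d : Type*} [Fintype d] [DecidableEq d] (ρ : Matrix d d ℂ) : Prop :=
  ρ.PosSemidef ∧ ρ.trace = 1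

/-- A density matrix on `ℂ^m ⊗ ℂ^n` is separable if it is a finite convex combination
of Kronecker products of density matrices on the factors. -/
def IsSepState {m n : ℕ} (ρ : Matrix (Fin m × Fin n) (Fin m × Fin n) ℂ) : Prop :=
  ∃ (k : ℕ) (p : Fin k → ℝ) (σ : Fin k → Matrix (Fin m) (Fin m) ℂ)
    (τ : Fin k → Matrix (Fin n) (Fin n) ℂ),
    (∀ i, 0 ≤ p i) ∧ (∑ i, p i = 1) ∧
    (∀ i, IsDensityMatrix (σ i)) ∧ (∀ i, IsDensityMatrix (τ i)) ∧
    ρ = ∑ i, ((p i : ℂ)) • ((σ i) ⊗ₖ (τ i))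

/-- A dichotomic observable: a Hermitian matrix squaring to the identity. -/
def IsDichotomic {d : Type*} [Fintype d] [DecidableEq d] (A : Matrix d d ℂ) : Prop :=
  A.IsHermitian ∧ A * A = 1

/-! ### Auxiliary real-analysis lemmas -/

lemma aux_cs3 (a b c x y z : ℝ) :
    |a*x + b*y + c*z| ≤ Real.sqrt (a^2+b^2+c^2) * Real.sqrt (x^2+y^2+z^2) := by
  rw [← Real.sqrt_sq_eq_abs, ← Real.sqrt_mul (by positivity)]
  have h : (a*x + b*y + c*z)^2 ≤ (a^2+b^2+c^2) * (x^2+y^2+z^2) := by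
    nlinarith [sq_nonneg (a*y - b*x), sq_nonneg (a*z - c*x), sq_nonneg (b*z - c*y)]
  exact Real.sqrt_le_sqrt h

lemma aux_tri3 (x y z u v w : ℝ) :
    Real.sqrt ((x+u)^2+(y+v)^2+(z+w)^2)
      ≤ Real.sqrt (x^2+y^2+z^2) + Real.sqrt (u^2+v^2+w^2) := by
  have hcs : x*u + y*v + z*w ≤ Real.sqrt (x^2+y^2+z^2) * Real.sqrt (u^2+v^2+w^2) :=
    le_trans (le_abs_self _) (aux_cs3 x y z u v w)
  have h1 : Real.sqrt (x^2+y^2+z^2) ^ 2 = x^2+y^2+z^2 := Real.sq_sqrt (by positivity)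
  have h2 : Real.sqrt (u^2+v^2+w^2) ^ 2 = u^2+v^2+w^2 := Real.sq_sqrt (by positivity)
  have key : (x+u)^2+(y+v)^2+(z+w)^2
      ≤ (Real.sqrt (x^2+y^2+z^2) + Real.sqrt (u^2+v^2+w^2))^2 := by nlinarith
  calc Real.sqrt ((x+u)^2+(y+v)^2+(z+w)^2)
      ≤ Real.sqrt ((Real.sqrt (x^2+y^2+z^2) + Real.sqrt (u^2+v^2+w^2))^2) := Real.sqrt_le_sqrt key
    _ = _ := Real.sqrt_sq (by positivity)

lemma aux_norm_split (t a b c : ℝ) (h1 : t^2+a^2+b^2+c^2 = 1)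
    (h2 : t*a = 0) (h3 : t*b = 0) (h4 : t*c = 0) :
    |t| + Real.sqrt (a^2+b^2+c^2) = 1 := by
  rcases eq_or_ne t 0 with h | h
  · subst h
    have : a^2+b^2+c^2 = 1 := by linarith [h1]
    simp [this]
  · have ha : a = 0 := by rcases mul_eq_zero.mp h2 with h'|h'; exact absurd h' h; exact h'
    have hb : b = 0 := by rcases mul_eq_zero.mp h3 with h'|h'; exact absurd h' h; exact h'
    have hc : c = 0 := by rcases mul_eq_zero.mp h4 with h'|h'; exact absurd h' h; exact h'
    subst ha; subst hb; subst hc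
    have h5 : t^2 = 1 := by linarith [h1]
    have : |t| = 1 := by rw [← Real.sqrt_sq_eq_abs, h5, Real.sqrt_one]
    simp [this]

lemma aux_abs4 (X Y Z W : ℝ) : |X + Y - (1/2)*(Z + W)| ≤ |X| + |Y| + (1/2)*|Z| + (1/2)*|W| := by
  rw [abs_le]
  constructor <;>
    [ (nlinarith [neg_abs_le X, neg_abs_le Y, le_abs_self Z, le_abs_self W]);
      (nlinarith [le_abs_self X, le_abs_self Y, neg_abs_le Z, neg_abs_le W])]

lemma aux_combo (x y P Q R S : ℝ) (hx0 : 0 ≤ x) (hx1 : x ≤ 1) (hy0 : 0 ≤ y) (hy1 : y ≤ 1)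
    (h1 : P + R ≤ 2) (h2 : P + S ≤ 2) (h3 : Q + R ≤ 2) (h4 : Q + S ≤ 2) :
    x*P + (1-x)*Q + y*R + (1-y)*S ≤ 2 := by
  nlinarith [mul_nonneg (mul_nonneg hx0 hy0) (by linarith : (0:ℝ) ≤ 2 - P - R),
    mul_nonneg (mul_nonneg hx0 (by linarith : (0:ℝ) ≤ 1 - y)) (by linarith : (0:ℝ) ≤ 2 - P - S),
    mul_nonneg (mul_nonneg (by linarith : (0:ℝ) ≤ 1 - x) hy0) (by linarith : (0:ℝ) ≤ 2 - Q - R),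
    mul_nonneg (mul_nonneg (by linarith : (0:ℝ) ≤ 1 - x) (by linarith : (0:ℝ) ≤ 1 - y))
      (by linarith : (0:ℝ) ≤ 2 - Q - S)]

/-- The core real CHSH bound for the `p = 1/2` Werner state. -/
lemma aux_chsh_key (t₁ a₁ a₂ a₃ t₂ c₁ c₂ c₃ u₁ b₁ b₂ b₃ u₂ d₁ d₂ d₃ : ℝ)
    (hA1 : t₁^2+a₁^2+a₂^2+a₃^2 = 1) (hA2 : t₁*a₁ = 0) (hA3 : t₁*a₂ = 0) (hA4 : t₁*a₃ = 0)
    (hC1 : t₂^2+c₁^2+c₂^2+c₃^2 = 1) (hC2 : t₂*c₁ = 0) (hC3 : t₂*c₂ = 0) (hC4 : t₂*c₃ = 0)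
    (hB1 : u₁^2+b₁^2+b₂^2+b₃^2 = 1) (hB2 : u₁*b₁ = 0) (hB3 : u₁*b₂ = 0) (hB4 : u₁*b₃ = 0)
    (hD1 : u₂^2+d₁^2+d₂^2+d₃^2 = 1) (hD2 : u₂*d₁ = 0) (hD3 : u₂*d₂ = 0) (hD4 : u₂*d₃ = 0) :
    |t₁*u₁ + t₁*u₂ + t₂*u₁ - t₂*u₂
      - (1/2) * ((a₁*b₁+a₂*b₂+a₃*b₃) + (a₁*d₁+a₂*d₂+a₃*d₃)
          + (c₁*b₁+c₂*b₂+c₃*b₃) - (c₁*d₁+c₂*d₂+c₃*d₃))| ≤ 2 := by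
  have hA := aux_norm_split t₁ a₁ a₂ a₃ hA1 hA2 hA3 hA4
  have hC := aux_norm_split t₂ c₁ c₂ c₃ hC1 hC2 hC3 hC4
  have hB := aux_norm_split u₁ b₁ b₂ b₃ hB1 hB2 hB3 hB4
  have hD := aux_norm_split u₂ d₁ d₂ d₃ hD1 hD2 hD3 hD4
  set na := Real.sqrt (a₁^2+a₂^2+a₃^2)
  set nc := Real.sqrt (c₁^2+c₂^2+c₃^2)
  set nb := Real.sqrt (b₁^2+b₂^2+b₃^2)
  set nd := Real.sqrt (d₁^2+d₂^2+d₃^2)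
  set q := Real.sqrt ((b₁+d₁)^2+(b₂+d₂)^2+(b₃+d₃)^2) with hq
  set s := Real.sqrt ((b₁-d₁)^2+(b₂-d₂)^2+(b₃-d₃)^2) with hs
  have hq0 : 0 ≤ q := Real.sqrt_nonneg _
  have hs0 : 0 ≤ s := Real.sqrt_nonneg _
  have hqle : q ≤ nb + nd := aux_tri3 b₁ b₂ b₃ d₁ d₂ d₃
  have hsle : s ≤ nb + nd := by
    have h := aux_tri3 b₁ b₂ b₃ (-d₁) (-d₂) (-d₃)
    simp only [neg_sq] at h
    have : s = Real.sqrt ((b₁ + -d₁)^2+(b₂ + -d₂)^2+(b₃ + -d₃)^2) := by rw [hs]; ring_nf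
    rw [this]; exact h
  have e0 : t₁*u₁ + t₁*u₂ + t₂*u₁ - t₂*u₂
      - (1/2) * ((a₁*b₁+a₂*b₂+a₃*b₃) + (a₁*d₁+a₂*d₂+a₃*d₃)
          + (c₁*b₁+c₂*b₂+c₃*b₃) - (c₁*d₁+c₂*d₂+c₃*d₃))
      = t₁*(u₁+u₂) + t₂*(u₁-u₂)
        - (1/2) * ((a₁*(b₁+d₁) + a₂*(b₂+d₂) + a₃*(b₃+d₃))
            + (c₁*(b₁-d₁) + c₂*(b₂-d₂) + c₃*(b₃-d₃))) := by ring
  rw [e0]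
  refine le_trans (aux_abs4 _ _ _ _) ?_
  have e1 : |a₁*(b₁+d₁) + a₂*(b₂+d₂) + a₃*(b₃+d₃)| ≤ na * q := aux_cs3 _ _ _ _ _ _
  have e2 : |c₁*(b₁-d₁) + c₂*(b₂-d₂) + c₃*(b₃-d₃)| ≤ nc * s := aux_cs3 _ _ _ _ _ _
  rw [abs_mul, abs_mul]
  have hnb0 : 0 ≤ nb := Real.sqrt_nonneg _
  have hnd0 : 0 ≤ nd := Real.sqrt_nonneg _
  have hna0 : 0 ≤ na := Real.sqrt_nonneg _
  have hnc0 : 0 ≤ nc := Real.sqrt_nonneg _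
  have hu1 : |u₁| ≤ 1 := by linarith
  have hu2 : |u₂| ≤ 1 := by linarith
  have C1 : |u₁+u₂| + |u₁-u₂| ≤ 2 := by
    rcases abs_cases (u₁+u₂) with ⟨e, _⟩ | ⟨e, _⟩ <;>
    rcases abs_cases (u₁-u₂) with ⟨f, _⟩ | ⟨f, _⟩ <;>
    rcases abs_cases u₁ with ⟨g, _⟩ | ⟨g, _⟩ <;>
    rcases abs_cases u₂ with ⟨k, _⟩ | ⟨k, _⟩ <;>
    rw [e, f] <;> linarith
  have C2 : |u₁+u₂| + (1/2)*s ≤ 2 := by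
    have h := abs_add_le u₁ u₂
    linarith [abs_nonneg u₁, abs_nonneg u₂]
  have C3 : (1/2)*q + |u₁-u₂| ≤ 2 := by
    have h := abs_sub u₁ u₂
    linarith [abs_nonneg u₁, abs_nonneg u₂]
  have C4 : (1/2)*q + (1/2)*s ≤ 2 := by linarith [abs_nonneg u₁, abs_nonneg u₂]
  have hcomb := aux_combo |t₁| |t₂| |u₁+u₂| ((1/2)*q) |u₁-u₂| ((1/2)*s)
    (abs_nonneg _) (by linarith) (abs_nonneg _) (by linarith) C1 C2 C3 C4
  have hna : na = 1 - |t₁| := by linarith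
  have hnc : nc = 1 - |t₂| := by linarith
  rw [hna] at e1
  rw [hnc] at e2
  linarith [e1, e2, hcomb]

/-! ### The Werner state -/

/-- The (unnormalized) singlet vector `(0, 1, -1, 0)`. -/
def wvec : Fin 2 × Fin 2 → ℂ := fun p => !![(0:ℂ), 1; -1, 0] p.1 p.2

/-- The (unnormalized) singlet projector, of trace 2. -/
def Wmat : Matrix (Fin 2 × Fin 2) (Fin 2 × Fin 2) ℂ := vecMulVec wvec (star wvec)

/-- The Werner state with visibility `1/2`. -/
def rho : Matrix (Fin 2 × Fin 2) (Fin 2 × Fin 2) ℂ :=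
  (1/8 : ℂ) • (1 : Matrix (Fin 2 × Fin 2) (Fin 2 × Fin 2) ℂ) + (1/4 : ℂ) • Wmat

lemma Wmat_psd : Wmat.PosSemidef := by
  refine Matrix.PosSemidef.of_dotProduct_mulVec_nonneg ?_ ?_
  · ext i j
    simp [Wmat, vecMulVec_apply, conjTranspose_apply, mul_comm]
  · intro x
    have hmv : Wmat *ᵥ x = (star wvec ⬝ᵥ x) • wvec := by
      ext i
      simp only [Wmat, vecMulVec, mulVec, dotProduct, Pi.smul_apply, smul_eq_mul, of_apply]
      rw [Finset.sum_mul]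
      exact Finset.sum_congr rfl fun _ _ => by ring
    rw [hmv]
    rw [dotProduct_smul]
    have : star x ⬝ᵥ wvec = star (star wvec ⬝ᵥ x) := by
      rw [star_dotProduct]
    rw [smul_eq_mul, mul_comm, this]
    exact star_mul_self_nonneg _

lemma aux_psd_add {n : Type*} [Fintype n] {M N : Matrix n n ℂ} (hM : M.PosSemidef)
    (hN : N.PosSemidef) : (M + N).PosSemidef := by
  refine Matrix.PosSemidef.of_dotProduct_mulVec_nonneg (hM.1.add hN.1) fun x => ?_
  rw [add_mulVec, dotProduct_add]
  exact add_nonneg (hM.dotProduct_mulVec_nonneg x) (hN.dotProduct_mulVec_nonneg x)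

lemma aux_psd_smul {n : Type*} [Fintype n] {M : Matrix n n ℂ} (hM : M.PosSemidef)
    {c : ℝ} (hc : 0 ≤ c) : ((c : ℂ) • M).PosSemidef := by
  refine Matrix.PosSemidef.of_dotProduct_mulVec_nonneg ?_ ?_
  · unfold Matrix.IsHermitian
    rw [conjTranspose_smul, hM.1.eq]
    congr 1
    simp
  · intro x
    rw [smul_mulVec, dotProduct_smul, smul_eq_mul]
    have h0 : (0:ℂ) ≤ (c:ℂ) := by exact_mod_cast hc
    exact mul_nonneg h0 (hM.dotProduct_mulVec_nonneg x)

lemma rho_psd : rho.PosSemidef := by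
  have h1 : ((1/8 : ℝ) : ℂ) • (1 : Matrix (Fin 2 × Fin 2) (Fin 2 × Fin 2) ℂ) |>.PosSemidef :=
    aux_psd_smul Matrix.PosSemidef.one (by norm_num)
  have h2 : ((1/4 : ℝ) : ℂ) • Wmat |>.PosSemidef := aux_psd_smul Wmat_psd (by norm_num)
  have := aux_psd_add h1 h2
  rw [rho]
  convert this using 3 <;> norm_num

lemma rho_trace : rho.trace = 1 := by
  simp [rho, Wmat, trace_add, trace_smul, trace_one, Matrix.trace, Matrix.diag,
    Fintype.sum_prod_type, Fin.sum_univ_two, vecMulVec_apply, wvec]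
  norm_num

lemma traceform (M : Matrix (Fin 2 × Fin 2) (Fin 2 × Fin 2) ℂ) :
    (rho * M).trace = (1/8) * M.trace
      + (1/4) * (M (0,1) (0,1) + M (1,0) (1,0) - M (1,0) (0,1) - M (0,1) (1,0)) := by
  rw [rho, add_mul, smul_mul_assoc, smul_mul_assoc, trace_add, trace_smul, trace_smul,
    one_mul, smul_eq_mul, smul_eq_mul]
  congr 1
  rw [Wmat]
  simp [Matrix.trace, Matrix.diag, Matrix.mul_apply, Fintype.sum_prod_type, Fin.sum_univ_two,
    vecMulVec_apply, wvec]
  ring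

lemma traceW (M : Matrix (Fin 2 × Fin 2) (Fin 2 × Fin 2) ℂ) :
    (M * Wmat).trace = M (0,1) (0,1) + M (1,0) (1,0) - M (0,1) (1,0) - M (1,0) (0,1) := by
  rw [Wmat]
  simp [Matrix.trace, Matrix.diag, Matrix.mul_apply, Fintype.sum_prod_type, Fin.sum_univ_two,
    vecMulVec_apply, wvec]
  ring

/-! ### Structure of dichotomic observables -/

lemma dichotomic_data {A : Matrix (Fin 2) (Fin 2) ℂ} (h : IsDichotomic A) :
    ∃ t a1 a2 a3 : ℝ,
      A 0 0 = ((t + a3 : ℝ) : ℂ) ∧ A 1 1 = ((t - a3 : ℝ) : ℂ) ∧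
      A 0 1 = (a1 : ℂ) + (a2 : ℂ) * Complex.I ∧
      A 1 0 = (a1 : ℂ) - (a2 : ℂ) * Complex.I ∧
      t^2 + a1^2 + a2^2 + a3^2 = 1 ∧ t*a1 = 0 ∧ t*a2 = 0 ∧ t*a3 = 0 := by
  obtain ⟨hH, hsq⟩ := h
  have h00im : (A 0 0).im = 0 := by
    have h' := congrArg Complex.im (hH.apply 0 0)
    simp [Complex.conj_im] at h'
    linarith
  have h11im : (A 1 1).im = 0 := by
    have h' := congrArg Complex.im (hH.apply 1 1)
    simp [Complex.conj_im] at h'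
    linarith
  have h10 : A 1 0 = starRingEnd ℂ (A 0 1) := by simpa using (hH.apply 1 0).symm
  set x := (A 0 0).re
  set y := (A 1 1).re
  set a1 := (A 0 1).re
  set a2 := (A 0 1).im
  have e00 : A 0 0 = (x : ℂ) := Complex.ext rfl h00im
  have e11 : A 1 1 = (y : ℂ) := Complex.ext rfl h11im
  have e01 : A 0 1 = (a1 : ℂ) + (a2 : ℂ) * Complex.I :=
    (Complex.re_add_im _).symm.trans (by push_cast; ring)
  have e10 : A 1 0 = (a1 : ℂ) - (a2 : ℂ) * Complex.I := by
    rw [h10, e01]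
    simp [Complex.ext_iff]
  have q00 := congrFun (congrFun hsq 0) 0
  have q01 := congrFun (congrFun hsq 0) 1
  have q11 := congrFun (congrFun hsq 1) 1
  rw [Matrix.mul_apply] at q00 q01 q11
  simp only [Fin.sum_univ_two, Matrix.one_apply_eq, Matrix.one_apply_ne,
    e00, e11, e01, e10] at q00 q01 q11
  rw [show (1:Matrix (Fin 2) (Fin 2) ℂ) 0 1 = 0 from by simp [Matrix.one_apply]] at q01
  rw [Complex.ext_iff] at q00 q11 q01
  obtain ⟨q00re, q00im⟩ := q00
  obtain ⟨q11re, q11im⟩ := q11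
  obtain ⟨q01re, q01im⟩ := q01
  simp only [Complex.add_re, Complex.add_im, Complex.sub_re, Complex.sub_im, Complex.mul_re,
    Complex.mul_im, Complex.ofReal_re, Complex.ofReal_im, Complex.I_re, Complex.I_im,
    Complex.one_re, Complex.one_im, Complex.zero_re, Complex.zero_im] at q00re q11re q01re q01im
  refine ⟨(x+y)/2, a1, a2, (x-y)/2, ?_, ?_, e01, e10, ?_, ?_, ?_, ?_⟩
  · rw [e00]; push_cast; ring
  · rw [e11]; push_cast; ring
  · nlinarith [q00re, q11re]
  · nlinarith [q01re, q01im]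
  · nlinarith [q01re, q01im]
  · nlinarith [q00re, q11re]

/-- Trace of the Werner state times a Kronecker product, in Bloch coordinates. -/
lemma trace_rho_kron (A B : Matrix (Fin 2) (Fin 2) ℂ) (t a1 a2 a3 u b1 b2 b3 : ℝ)
    (hA00 : A 0 0 = ((t + a3 : ℝ) : ℂ)) (hA11 : A 1 1 = ((t - a3 : ℝ) : ℂ))
    (hA01 : A 0 1 = (a1 : ℂ) + (a2 : ℂ) * Complex.I)
    (hA10 : A 1 0 = (a1 : ℂ) - (a2 : ℂ) * Complex.I)
    (hB00 : B 0 0 = ((u + b3 : ℝ) : ℂ)) (hB11 : B 1 1 = ((u - b3 : ℝ) : ℂ))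
    (hB01 : B 0 1 = (b1 : ℂ) + (b2 : ℂ) * Complex.I)
    (hB10 : B 1 0 = (b1 : ℂ) - (b2 : ℂ) * Complex.I) :
    (rho * (A ⊗ₖ B)).trace = ((t*u - (1/2)*(a1*b1 + a2*b2 + a3*b3) : ℝ) : ℂ) := by
  rw [traceform, trace_kronecker]
  have hk : ∀ (i j k l : Fin 2), (A ⊗ₖ B) (i, k) (j, l) = A i j * B k l := by
    intro i j k l
    simp [kroneckerMap_apply]
  rw [hk, hk, hk, hk, Matrix.trace_fin_two, Matrix.trace_fin_two,
    hA00, hA11, hA01, hA10, hB00, hB11, hB01, hB10]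
  apply Complex.ext <;>
    simp only [Complex.add_re, Complex.add_im, Complex.sub_re, Complex.sub_im, Complex.mul_re,
      Complex.mul_im, Complex.ofReal_re, Complex.ofReal_im, Complex.I_re, Complex.I_im,
      Complex.one_re, Complex.one_im, Complex.zero_re, Complex.zero_im,
      Complex.div_re, Complex.div_im, Complex.normSq_apply] <;>
    norm_num <;> ring

lemma sep_witness : (rho * Wmat).trace = 5/4 := by
  rw [traceform]
  have h1 : Wmat.trace = 2 := by
    simp [Wmat, Matrix.trace, Matrix.diag, Fintype.sum_prod_type, Fin.sum_univ_two,
      vecMulVec_apply, wvec]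
    norm_num
  rw [h1]
  simp [Wmat, vecMulVec_apply, wvec]
  norm_num

/-! ### PSD entry facts and the separable-state bound -/

lemma psd_entry_facts {M : Matrix (Fin 2) (Fin 2) ℂ} (h : M.PosSemidef) :
    0 ≤ (M 0 0).re ∧ 0 ≤ (M 1 1).re ∧ (M 0 0).im = 0 ∧ (M 1 1).im = 0 ∧
    M 1 0 = starRingEnd ℂ (M 0 1) ∧
    (M 0 1).re^2 + (M 0 1).im^2 ≤ (M 0 0).re * (M 1 1).re := by
  have h10 : M 1 0 = starRingEnd ℂ (M 0 1) := by simpa using (h.isHermitian.apply 1 0).symm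
  have h00 : 0 ≤ (M 0 0).re := by
    have := h.re_dotProduct_nonneg (Pi.single 0 1)
    simpa [dotProduct, mulVec, Fin.sum_univ_two, Pi.single] using this
  have h11 : 0 ≤ (M 1 1).re := by
    have := h.re_dotProduct_nonneg (Pi.single 1 1)
    simpa [dotProduct, mulVec, Fin.sum_univ_two, Pi.single] using this
  have h00im : (M 0 0).im = 0 := by
    have h' := congrArg Complex.im (h.isHermitian.apply 0 0)
    simp [Complex.conj_im] at h'
    linarith
  have h11im : (M 1 1).im = 0 := by
    have h' := congrArg Complex.im (h.isHermitian.apply 1 1)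
    simp [Complex.conj_im] at h'
    linarith
  refine ⟨h00, h11, h00im, h11im, h10, ?_⟩
  have habs : ‖M 0 1‖^2 = (M 0 1).re^2 + (M 0 1).im^2 := by
    rw [Complex.sq_norm, Complex.normSq_apply]; ring
  rw [← habs]
  have key : ∀ t : ℝ, 0 ≤ ((M 0 0).re * ‖M 0 1‖^2) * (t * t)
      + (2 * ‖M 0 1‖^2) * t + (M 1 1).re := by
    intro t
    have h2 := h.dotProduct_mulVec_nonneg ![(t : ℂ) * M 0 1, 1]
    rw [Complex.le_def] at h2
    obtain ⟨h2, -⟩ := h2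
    simp only [dotProduct, mulVec, Fin.sum_univ_two, Matrix.cons_val_zero, Matrix.cons_val_one,
      Matrix.head_cons, h10, Pi.star_apply, RCLike.star_def, Complex.zero_re, Complex.add_re,
      Complex.mul_re, Complex.mul_im, Complex.add_im, Complex.conj_re, Complex.conj_im,
      Complex.ofReal_re, Complex.ofReal_im, Complex.one_re, Complex.one_im] at h2
    rw [habs]
    nlinarith [h2]
  have hd := discrim_le_zero key
  rw [discrim] at hd
  rcases eq_or_lt_of_le (norm_nonneg (M 0 1)) with hz | hz
  · rw [← hz]; simpa using mul_nonneg h00 h11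
  · nlinarith [hd, mul_pos hz hz]

lemma sep_term_bound {σ τ : Matrix (Fin 2) (Fin 2) ℂ}
    (hσ : IsDensityMatrix σ) (hτ : IsDensityMatrix τ) :
    (σ 0 0 * τ 1 1 + σ 1 1 * τ 0 0 - σ 0 1 * τ 1 0 - σ 1 0 * τ 0 1).re ≤ 1 := by
  obtain ⟨hσp, hσt⟩ := hσ
  obtain ⟨hτp, hτt⟩ := hτ
  obtain ⟨s0, s1, s0i, s1i, s10, scs⟩ := psd_entry_facts hσp
  obtain ⟨t0, t1, t0i, t1i, t10, tcs⟩ := psd_entry_facts hτp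
  have hstr : (σ 0 0).re + (σ 1 1).re = 1 := by
    have := congrArg Complex.re hσt
    simpa [Matrix.trace_fin_two] using this
  have httr : (τ 0 0).re + (τ 1 1).re = 1 := by
    have := congrArg Complex.re hτt
    simpa [Matrix.trace_fin_two] using this
  rw [s10, t10]
  simp only [Complex.sub_re, Complex.add_re, Complex.mul_re, Complex.conj_re, Complex.conj_im,
    s0i, s1i, t0i, t1i]
  set a := (σ 0 0).re; set b := (σ 1 1).re
  set c := (τ 0 0).re; set d := (τ 1 1).re
  set p := (σ 0 1).re; set r := (σ 0 1).im
  set q := (τ 0 1).re; set s := (τ 0 1).im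
  have h3 : (p^2+r^2) * (q^2+s^2) ≤ (a*b) * (c*d) :=
    mul_le_mul scs tcs (by positivity) (mul_nonneg s0 s1)
  have hX2 : (2*(p*q + r*s))^2 ≤ (a*c + b*d)^2 := by
    nlinarith [h3, sq_nonneg (p*s - r*q), sq_nonneg (a*c - b*d)]
  have hM : 0 ≤ a*c + b*d := by positivity
  have hfin : -(a*c + b*d) ≤ 2*(p*q + r*s) := by nlinarith [hX2, hM]
  have hprod : a*c + a*d + b*c + b*d = 1 := by
    have : (a+b)*(c+d) = 1 := by rw [hstr, httr]; ring
    nlinarith [this]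
  linarith

/-! ### Main theorem -/

/-- There is an entangled (non-separable) two-qubit density matrix satisfying the
CHSH inequality for all dichotomic observables: CHSH compliance cannot certify
separability. -/
theorem chsh_compliance_does_not_certify_separability :
    ∃ ρ : Matrix (Fin 2 × Fin 2) (Fin 2 × Fin 2) ℂ,
      IsDensityMatrix ρ ∧ ¬ IsSepState ρ ∧
      ∀ A₁ A₂ B₁ B₂ : Matrix (Fin 2) (Fin 2) ℂ,
        IsDichotomic A₁ → IsDichotomic A₂ → IsDichotomic B₁ → IsDichotomic B₂ →
        ‖(ρ *
          (A₁ ⊗ₖ B₁ + A₁ ⊗ₖ B₂ + A₂ ⊗ₖ B₁ - A₂ ⊗ₖ B₂)).trace‖ ≤ 2 := by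
  refine ⟨rho, ⟨rho_psd, rho_trace⟩, ?_, ?_⟩
  · -- not separable
    rintro ⟨k, p, σ, τ, hp0, hp1, hσ, hτ, heq⟩
    have hsum : (rho * Wmat).trace = ∑ i, (p i : ℂ) * ((σ i ⊗ₖ τ i) * Wmat).trace := by
      rw [heq, Finset.sum_mul, trace_sum]
      congr 1
      ext i
      rw [smul_mul_assoc, trace_smul, smul_eq_mul]
    have hterm : ∀ i, ((σ i ⊗ₖ τ i) * Wmat).trace
        = σ i 0 0 * τ i 1 1 + σ i 1 1 * τ i 0 0 - σ i 0 1 * τ i 1 0 - σ i 1 0 * τ i 0 1 := by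
      intro i
      rw [traceW]
      simp [kroneckerMap_apply]
    have hre : (5/4 : ℝ) = ∑ i, p i * ((σ i ⊗ₖ τ i) * Wmat).trace.re := by
      have := congrArg Complex.re (sep_witness.symm.trans hsum)
      rw [Complex.re_sum] at this
      convert this using 2 with i
      · norm_num
      · simp [Complex.mul_re, Complex.ofReal_re, Complex.ofReal_im]
    have hbound : ∑ i, p i * ((σ i ⊗ₖ τ i) * Wmat).trace.re ≤ 1 := by
      calc ∑ i, p i * ((σ i ⊗ₖ τ i) * Wmat).trace.re
          ≤ ∑ i, p i * 1 := by
            apply Finset.sum_le_sum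
            intro i _
            apply mul_le_mul_of_nonneg_left _ (hp0 i)
            rw [hterm i]
            exact sep_term_bound (hσ i) (hτ i)
        _ = 1 := by simp [hp1]
    rw [← hre] at hbound
    norm_num at hbound
  · -- CHSH bound
    intro A₁ A₂ B₁ B₂ h1 h2 h3 h4
    obtain ⟨t₁, a1, a2, a3, hA00, hA11, hA01, hA10, hAn, hAz1, hAz2, hAz3⟩ := dichotomic_data h1
    obtain ⟨t₂, c1, c2, c3, hC00, hC11, hC01, hC10, hCn, hCz1, hCz2, hCz3⟩ := dichotomic_data h2
    obtain ⟨u₁, b1, b2, b3, hB00, hB11, hB01, hB10, hBn, hBz1, hBz2, hBz3⟩ := dichotomic_data h3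
    obtain ⟨u₂, d1, d2, d3, hD00, hD11, hD01, hD10, hDn, hDz1, hDz2, hDz3⟩ := dichotomic_data h4
    have e1 := trace_rho_kron A₁ B₁ t₁ a1 a2 a3 u₁ b1 b2 b3 hA00 hA11 hA01 hA10 hB00 hB11 hB01 hB10
    have e2 := trace_rho_kron A₁ B₂ t₁ a1 a2 a3 u₂ d1 d2 d3 hA00 hA11 hA01 hA10 hD00 hD11 hD01 hD10
    have e3 := trace_rho_kron A₂ B₁ t₂ c1 c2 c3 u₁ b1 b2 b3 hC00 hC11 hC01 hC10 hB00 hB11 hB01 hB10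
    have e4 := trace_rho_kron A₂ B₂ t₂ c1 c2 c3 u₂ d1 d2 d3 hC00 hC11 hC01 hC10 hD00 hD11 hD01 hD10
    have expand : (rho * (A₁ ⊗ₖ B₁ + A₁ ⊗ₖ B₂ + A₂ ⊗ₖ B₁ - A₂ ⊗ₖ B₂)).trace
        = (rho * (A₁ ⊗ₖ B₁)).trace + (rho * (A₁ ⊗ₖ B₂)).trace
          + (rho * (A₂ ⊗ₖ B₁)).trace - (rho * (A₂ ⊗ₖ B₂)).trace := by
      rw [mul_sub, mul_add, mul_add, trace_sub, trace_add, trace_add]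
    rw [expand, e1, e2, e3, e4]
    rw [show ((( t₁*u₁ - (1/2)*(a1*b1 + a2*b2 + a3*b3) : ℝ) : ℂ)
        + ((t₁*u₂ - (1/2)*(a1*d1 + a2*d2 + a3*d3) : ℝ) : ℂ)
        + ((t₂*u₁ - (1/2)*(c1*b1 + c2*b2 + c3*b3) : ℝ) : ℂ)
        - ((t₂*u₂ - (1/2)*(c1*d1 + c2*d2 + c3*d3) : ℝ) : ℂ))
        = (((t₁*u₁ - (1/2)*(a1*b1 + a2*b2 + a3*b3))
          + (t₁*u₂ - (1/2)*(a1*d1 + a2*d2 + a3*d3))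
          + (t₂*u₁ - (1/2)*(c1*b1 + c2*b2 + c3*b3))
          - (t₂*u₂ - (1/2)*(c1*d1 + c2*d2 + c3*d3)) : ℝ) : ℂ) from by push_cast; ring]
    rw [Complex.norm_real, Real.norm_eq_abs]
    have key := aux_chsh_key t₁ a1 a2 a3 t₂ c1 c2 c3 u₁ b1 b2 b3 u₂ d1 d2 d3
      hAn hAz1 hAz2 hAz3 hCn hCz1 hCz2 hCz3 hBn hBz1 hBz2 hBz3 hDn hDz1 hDz2 hDz3
    calc |((t₁*u₁ - (1/2)*(a1*b1 + a2*b2 + a3*b3))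
          + (t₁*u₂ - (1/2)*(a1*d1 + a2*d2 + a3*d3))
          + (t₂*u₁ - (1/2)*(c1*b1 + c2*b2 + c3*b3))
          - (t₂*u₂ - (1/2)*(c1*d1 + c2*d2 + c3*d3)))|
        = |t₁*u₁ + t₁*u₂ + t₂*u₁ - t₂*u₂
          - (1/2) * ((a1*b1+a2*b2+a3*b3) + (a1*d1+a2*d2+a3*d3)
              + (c1*b1+c2*b2+c3*b3) - (c1*d1+c2*d2+c3*d3))| := by ring_nf
      _ ≤ 2 := key
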